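/- Let C be a binary code of length n with C^⊥ ⊆ C and C ≠ 𝔽₂ⁿ. Then the pair (C, C^⊥) is a maximal element of the poset 𝒫 of CSS-T pairs (i.e., (C, C^⊥) is a CSS-T pair and every CSS-T pair (D₁, D₂) with D₂ ≠ {0}, C ⊆ D₁ and C^⊥ ⊆ D₂ satisfies D₁ = C and D₂ = C^⊥) if and only if C^{⋆2} = C. -/

import Mathlib

open Finset

/-- The Euclidean dual of a binary code. -/
def dualCode {n : ℕ} (C : Submodule (ZMod 2) (Fin n → ZMod 2)) :
    Submodule (ZMod 2) (Fin n → ZMod 2) where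
  carrier := {x | ∀ c ∈ C, ∑ i, x i * c i = 0}
  add_mem' := by
    intro a b ha hb
    intro c hc
    have : ∑ i, (a + b) i * c i = ∑ i, (a i * c i + b i * c i) := by
      apply Finset.sum_congr rfl
      intro i _
      simp [add_mul]
    rw [this, Finset.sum_add_distrib, ha c hc, hb c hc, add_zero]
  zero_mem' := by
    intro c hc
    simp
  smul_mem' := by
    intro r a ha
    intro c hc
    have : ∑ i, (r • a) i * c i = r * ∑ i, a i * c i := by
      rw [Finset.mul_sum]
      apply Finset.sum_congr rfl
      intro i _
      simp [mul_assoc]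
    rw [this, ha c hc, mul_zero]

/-- The (componentwise) Schur product of two binary codes. -/
def schur {n : ℕ} (C D : Submodule (ZMod 2) (Fin n → ZMod 2)) :
    Submodule (ZMod 2) (Fin n → ZMod 2) :=
  Submodule.span (ZMod 2) {x | ∃ c ∈ C, ∃ d ∈ D, x = c * d}

/-- A pair of binary codes `(C₁, C₂)` is a CSS-T pair if `C₂ ⊆ C₁ ∩ (C₁^{⋆2})^⊥`. -/
def IsCSST {n : ℕ} (C₁ C₂ : Submodule (ZMod 2) (Fin n → ZMod 2)) : Prop :=
  C₂ ≤ C₁ ⊓ dualCode (schur C₁ C₁)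

/-- The standard dot-product bilinear form on `𝔽₂ⁿ`. -/
def dotB (n : ℕ) : LinearMap.BilinForm (ZMod 2) (Fin n → ZMod 2) :=
  LinearMap.mk₂ (ZMod 2) (fun x y => ∑ i, x i * y i)
    (fun a b c => by simp [add_mul, Finset.sum_add_distrib])
    (fun r a c => by simp [Finset.mul_sum, mul_assoc])
    (fun a b c => by simp [mul_add, Finset.sum_add_distrib])
    (fun r a c => by simp [Finset.mul_sum, mul_left_comm])

lemma dotB_apply (n : ℕ) (x y : Fin n → ZMod 2) : dotB n x y = ∑ i, x i * y i := rfl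

lemma dotB_refl (n : ℕ) : (dotB n).IsRefl := by
  intro x y h
  rw [dotB_apply] at h ⊢
  simpa [mul_comm] using h

lemma dotB_nondeg (n : ℕ) : (dotB n).Nondegenerate := by
  constructor
  swap
  · intro y h
    funext i
    have := h (Pi.single i 1)
    rw [dotB_apply] at this
    simpa [Pi.single_apply, Finset.sum_ite_eq'] using this
  intro x h
  funext i
  have := h (Pi.single i 1)
  rw [dotB_apply] at this
  simpa [Pi.single_apply, Finset.sum_ite_eq'] using this

lemma dualCode_eq_orthogonal {n : ℕ} (C : Submodule (ZMod 2) (Fin n → ZMod 2)) :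
    dualCode C = (dotB n).orthogonal C := by
  ext x
  constructor
  · intro hx c hc
    have := hx c hc
    rw [dotB_apply]
    simpa [mul_comm] using this
  · intro hx c hc
    have := hx c hc
    rw [dotB_apply] at this
    simpa [mul_comm] using this

lemma dualCode_dualCode {n : ℕ} (C : Submodule (ZMod 2) (Fin n → ZMod 2)) :
    dualCode (dualCode C) = C := by
  rw [dualCode_eq_orthogonal, dualCode_eq_orthogonal]
  exact LinearMap.BilinForm.orthogonal_orthogonal (dotB_nondeg n) (dotB_refl n) C

lemma dualCode_antitone {n : ℕ} {C D : Submodule (ZMod 2) (Fin n → ZMod 2)} (h : C ≤ D) :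
    dualCode D ≤ dualCode C := fun x hx c hc => hx c (h hc)

lemma le_dualCode_swap {n : ℕ} {C D : Submodule (ZMod 2) (Fin n → ZMod 2)}
    (h : C ≤ dualCode D) : D ≤ dualCode C := by
  intro d hd c hc
  have := h hc d hd
  simpa [mul_comm] using this

lemma le_schur_self {n : ℕ} (C : Submodule (ZMod 2) (Fin n → ZMod 2)) : C ≤ schur C C := by
  intro c hc
  apply Submodule.subset_span
  refine ⟨c, hc, c, hc, ?_⟩
  funext i
  have : ∀ a : ZMod 2, a = a * a := by decide
  exact this (c i)

theorem stmt_13 (n : ℕ) (C : Submodule (ZMod 2) (Fin n → ZMod 2))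
    (hdual : dualCode C ≤ C) (hC : C ≠ ⊤) :
    (IsCSST C (dualCode C) ∧
      ∀ D₁ D₂ : Submodule (ZMod 2) (Fin n → ZMod 2),
        IsCSST D₁ D₂ → D₂ ≠ ⊥ → C ≤ D₁ → dualCode C ≤ D₂ → D₁ = C ∧ D₂ = dualCode C)
    ↔ schur C C = C := by
  constructor
  · rintro ⟨hcsst, -⟩
    have h1 : dualCode C ≤ dualCode (schur C C) := fun x hx => (hcsst hx).2
    have h2 : schur C C ≤ dualCode (dualCode C) := le_dualCode_swap h1
    rw [dualCode_dualCode] at h2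
    exact le_antisymm h2 (le_schur_self C)
  · intro hschur
    constructor
    · refine le_inf hdual ?_
      rw [hschur]
    · intro D₁ D₂ hD hD2 hCD hCdD
      have hDschur : D₂ ≤ dualCode (schur D₁ D₁) := fun x hx => (hD hx).2
      have hD1le : D₁ ≤ schur D₁ D₁ := le_schur_self D₁
      have hD2le : D₂ ≤ dualCode C :=
        le_trans hDschur (dualCode_antitone (le_trans hCD hD1le))
      have hD2eq : D₂ = dualCode C := le_antisymm hD2le hCdD
      have h3 : dualCode C ≤ dualCode (schur D₁ D₁) := hD2eq ▸ hDschur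
      have h4 : schur D₁ D₁ ≤ dualCode (dualCode C) := le_dualCode_swap h3
      rw [dualCode_dualCode] at h4
      exact ⟨le_antisymm (le_trans hD1le h4) hCD, hD2eq⟩
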